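/- Let Σ* be an invertible diagonal r×r real matrix, W an r×r real matrix, and E an n×r real matrix. Suppose Û = U*Σ*W + E where U* is an n×r matrix with orthonormal columns, and let Û = U R be such that R² = ÛᵀÛ (so U has orthonormal columns when R is invertible). If σ_min(Σ*)·σ_min(W) > ‖Σ*‖₂·‖E(Σ*)⁻¹‖₂, then ‖(I − U*(U*)ᵀ)U‖₂ ≤ ‖E(Σ*)⁻¹‖₂ / ((σ_min(Σ*)/‖Σ*‖₂)·σ_min(W) − ‖E(Σ*)⁻¹‖₂). -/

import Mathlib

open Matrix

/-- Spectral (operator) norm of a real matrix. -/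
noncomputable def sNorm {n r : ℕ} (A : Matrix (Fin n) (Fin r) ℝ) : ℝ :=
  ‖(LinearMap.toContinuousLinearMap (Matrix.toEuclideanLin A))‖

/-- Smallest singular value of a real matrix. -/
noncomputable def sMin {n r : ℕ} (A : Matrix (Fin n) (Fin r) ℝ) : ℝ :=
  ⨅ x : Metric.sphere (0 : EuclideanSpace ℝ (Fin r)) 1, ‖Matrix.toEuclideanLin A x‖

lemma eL_mul {a b c : ℕ} (A : Matrix (Fin a) (Fin b) ℝ) (B : Matrix (Fin b) (Fin c) ℝ)
    (x : EuclideanSpace ℝ (Fin c)) :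
    Matrix.toEuclideanLin (A * B) x = Matrix.toEuclideanLin A (Matrix.toEuclideanLin B x) := by
  simp [Matrix.toEuclideanLin_apply, Matrix.mulVec_mulVec]

lemma eL_one {a : ℕ} (x : EuclideanSpace ℝ (Fin a)) :
    Matrix.toEuclideanLin (1 : Matrix (Fin a) (Fin a) ℝ) x = x := by
  simp [Matrix.toEuclideanLin_apply]

lemma eL_inner {a b : ℕ} (A : Matrix (Fin a) (Fin b) ℝ) (x : EuclideanSpace ℝ (Fin b))
    (y : EuclideanSpace ℝ (Fin a)) :
    inner ℝ (Matrix.toEuclideanLin A x) y = (inner ℝ x (Matrix.toEuclideanLin Aᵀ y) : ℝ) := by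
  have h : Aᵀ = Aᴴ := by ext i j; simp [Matrix.conjTranspose_apply]
  rw [h, Matrix.toEuclideanLin_conjTranspose_eq_adjoint, LinearMap.adjoint_inner_right]

lemma eL_norm_sq {a b : ℕ} (A : Matrix (Fin a) (Fin b) ℝ) (x : EuclideanSpace ℝ (Fin b)) :
    ‖Matrix.toEuclideanLin A x‖ ^ 2 = inner ℝ x (Matrix.toEuclideanLin (Aᵀ * A) x) := by
  rw [eL_mul, ← eL_inner, real_inner_self_eq_norm_sq]

lemma eL_norm_eq_of_gram {a b c : ℕ} (A : Matrix (Fin a) (Fin c) ℝ)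
    (B : Matrix (Fin b) (Fin c) ℝ) (h : Aᵀ * A = Bᵀ * B) (x : EuclideanSpace ℝ (Fin c)) :
    ‖Matrix.toEuclideanLin A x‖ = ‖Matrix.toEuclideanLin B x‖ := by
  have h2 : ‖Matrix.toEuclideanLin A x‖ ^ 2 = ‖Matrix.toEuclideanLin B x‖ ^ 2 := by
    rw [eL_norm_sq, eL_norm_sq, h]
  calc ‖Matrix.toEuclideanLin A x‖ = Real.sqrt (‖Matrix.toEuclideanLin A x‖ ^ 2) :=
        (Real.sqrt_sq (norm_nonneg _)).symm
    _ = Real.sqrt (‖Matrix.toEuclideanLin B x‖ ^ 2) := by rw [h2]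
    _ = ‖Matrix.toEuclideanLin B x‖ := Real.sqrt_sq (norm_nonneg _)

lemma le_sNorm {a b : ℕ} (A : Matrix (Fin a) (Fin b) ℝ) (x : EuclideanSpace ℝ (Fin b)) :
    ‖Matrix.toEuclideanLin A x‖ ≤ sNorm A * ‖x‖ := by
  simpa [sNorm] using (LinearMap.toContinuousLinearMap (Matrix.toEuclideanLin A)).le_opNorm x

lemma sNorm_le {a b : ℕ} (A : Matrix (Fin a) (Fin b) ℝ) {M : ℝ} (hM : 0 ≤ M)
    (h : ∀ x : EuclideanSpace ℝ (Fin b), ‖Matrix.toEuclideanLin A x‖ ≤ M * ‖x‖) :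
    sNorm A ≤ M := by
  apply ContinuousLinearMap.opNorm_le_bound _ hM
  intro x; simpa using h x

lemma sNorm_nonneg {a b : ℕ} (A : Matrix (Fin a) (Fin b) ℝ) : 0 ≤ sNorm A := norm_nonneg _

lemma sMin_nonneg {a b : ℕ} (A : Matrix (Fin a) (Fin b) ℝ) : 0 ≤ sMin A :=
  Real.iInf_nonneg fun _ => norm_nonneg _

lemma sMin_le_unit {a b : ℕ} (A : Matrix (Fin a) (Fin b) ℝ) {x : EuclideanSpace ℝ (Fin b)}
    (hx : ‖x‖ = 1) : sMin A ≤ ‖Matrix.toEuclideanLin A x‖ := by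
  have hmem : x ∈ Metric.sphere (0 : EuclideanSpace ℝ (Fin b)) 1 := by
    simpa [mem_sphere_zero_iff_norm] using hx
  exact ciInf_le ⟨0, by rintro _ ⟨y, rfl⟩; exact norm_nonneg _⟩ (⟨x, hmem⟩ :
    Metric.sphere (0 : EuclideanSpace ℝ (Fin b)) 1)

lemma sMin_mul_le {a b : ℕ} (A : Matrix (Fin a) (Fin b) ℝ) (x : EuclideanSpace ℝ (Fin b)) :
    sMin A * ‖x‖ ≤ ‖Matrix.toEuclideanLin A x‖ := by
  by_cases hx : x = 0
  · simp [hx]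
  · have hnx : (0:ℝ) < ‖x‖ := norm_pos_iff.2 hx
    set u : EuclideanSpace ℝ (Fin b) := ‖x‖⁻¹ • x with hu
    have hun : ‖u‖ = 1 := by
      rw [hu, norm_smul]; simp [abs_of_pos (inv_pos.2 hnx), inv_mul_cancel₀ hnx.ne']
    have h1 := sMin_le_unit A hun
    have h2 : Matrix.toEuclideanLin A u = ‖x‖⁻¹ • Matrix.toEuclideanLin A x := by
      rw [hu, _root_.map_smul]
    rw [h2, norm_smul, Real.norm_eq_abs, abs_of_pos (inv_pos.2 hnx)] at h1
    calc sMin A * ‖x‖ ≤ (‖x‖⁻¹ * ‖Matrix.toEuclideanLin A x‖) * ‖x‖ :=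
          mul_le_mul_of_nonneg_right h1 (norm_nonneg _)
      _ = ‖Matrix.toEuclideanLin A x‖ := by field_simp

theorem stmt0 {n r : ℕ}
    (Ustar : Matrix (Fin n) (Fin r) ℝ) (S W : Matrix (Fin r) (Fin r) ℝ)
    (E : Matrix (Fin n) (Fin r) ℝ)
    (hUstar : Ustarᵀ * Ustar = 1)
    (hdiag : S.IsDiag) (hSinv : IsUnit S.det)
    (Uhat : Matrix (Fin n) (Fin r) ℝ) (hUhat : Uhat = Ustar * S * W + E)
    (R : Matrix (Fin r) (Fin r) ℝ)
    (hRpsd : R.PosSemidef) (hR2 : R * R = Uhatᵀ * Uhat) (hRinv : IsUnit R.det)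
    (U : Matrix (Fin n) (Fin r) ℝ) (hU : U = Uhat * R⁻¹)
    (hgap : sNorm S * sNorm (E * S⁻¹) < sMin S * sMin W) :
    sNorm ((1 - Ustar * Ustarᵀ) * U) ≤
      sNorm (E * S⁻¹) / ((sMin S / sNorm S) * sMin W - sNorm (E * S⁻¹)) := by
  have hprod_pos : 0 < sMin S * sMin W :=
    lt_of_le_of_lt (mul_nonneg (sNorm_nonneg _) (sNorm_nonneg _)) hgap
  have hSmin_pos : 0 < sMin S := by
    rcases lt_or_eq_of_le (sMin_nonneg S) with h | h
    · exact h
    · exfalso; rw [← h] at hprod_pos; simp at hprod_pos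
  have hWmin_pos : 0 < sMin W := by
    rcases lt_or_eq_of_le (sMin_nonneg W) with h | h
    · exact h
    · exfalso; rw [← h] at hprod_pos; simp at hprod_pos
  have hr : 0 < r := by
    by_contra hr0
    have hre : r = 0 := Nat.eq_zero_of_not_pos hr0
    subst hre
    haveI : IsEmpty (Metric.sphere (0 : EuclideanSpace ℝ (Fin 0)) 1) := by
      constructor; rintro ⟨x, hx⟩
      rw [mem_sphere_zero_iff_norm] at hx
      have hx0 : x = 0 := Subsingleton.elim _ _
      rw [hx0] at hx; simp at hx
    have h0 : sMin S = 0 := Real.iInf_of_isEmpty _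
    rw [h0] at hSmin_pos; exact lt_irrefl _ hSmin_pos
  have hSnorm_pos : 0 < sNorm S := by
    have hex : ‖(EuclideanSpace.single (⟨0, hr⟩ : Fin r) (1:ℝ) : EuclideanSpace ℝ (Fin r))‖ = 1 := by
      simp [EuclideanSpace.norm_single]
    have h1 := sMin_le_unit S hex
    have h2 := le_sNorm S (EuclideanSpace.single (⟨0, hr⟩ : Fin r) (1:ℝ))
    rw [hex, mul_one] at h2
    linarith
  set e : ℝ := sNorm (E * S⁻¹) with he
  have he0 : 0 ≤ e := sNorm_nonneg _
  set c : ℝ := sMin S * sMin W - sNorm S * e with hc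
  have hc_pos : 0 < c := by rw [hc]; linarith
  have hE : E = (E * S⁻¹) * S := by
    rw [Matrix.mul_assoc, Matrix.nonsing_inv_mul S hSinv, Matrix.mul_one]
  have hIso : ∀ x : EuclideanSpace ℝ (Fin r),
      ‖Matrix.toEuclideanLin Ustar x‖ = ‖x‖ := by
    intro x
    have hg := eL_norm_eq_of_gram Ustar (1 : Matrix (Fin r) (Fin r) ℝ) (by simpa using hUstar) x
    rw [hg, eL_one]
  -- lower bound on ‖Uhat z‖
  have hUhat_lower : ∀ z : EuclideanSpace ℝ (Fin r),
      c * ‖z‖ ≤ ‖Matrix.toEuclideanLin Uhat z‖ := by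
    intro z
    have hEz : ‖Matrix.toEuclideanLin E z‖ ≤ e * (sNorm S * ‖z‖) := by
      calc ‖Matrix.toEuclideanLin E z‖
          = ‖Matrix.toEuclideanLin (E * S⁻¹) (Matrix.toEuclideanLin S z)‖ := by
            conv_lhs => rw [hE]
            rw [eL_mul]
        _ ≤ e * ‖Matrix.toEuclideanLin S z‖ := le_sNorm _ _
        _ ≤ e * (sNorm S * ‖z‖) := mul_le_mul_of_nonneg_left (le_sNorm _ _) he0
    have hGz : sMin S * sMin W * ‖z‖ ≤ ‖Matrix.toEuclideanLin (Ustar * S * W) z‖ := by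
      have h1 : Matrix.toEuclideanLin (Ustar * S * W) z
          = Matrix.toEuclideanLin Ustar (Matrix.toEuclideanLin S (Matrix.toEuclideanLin W z)) := by
        rw [eL_mul, eL_mul]
      rw [h1, hIso]
      calc sMin S * sMin W * ‖z‖ = sMin S * (sMin W * ‖z‖) := by ring
        _ ≤ sMin S * ‖Matrix.toEuclideanLin W z‖ :=
            mul_le_mul_of_nonneg_left (sMin_mul_le W z) (le_of_lt hSmin_pos)
        _ ≤ ‖Matrix.toEuclideanLin S (Matrix.toEuclideanLin W z)‖ := sMin_mul_le _ _
    have hsum : Matrix.toEuclideanLin Uhat z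
        = Matrix.toEuclideanLin (Ustar * S * W) z + Matrix.toEuclideanLin E z := by
      rw [hUhat, map_add, LinearMap.add_apply]
    have htri : ‖Matrix.toEuclideanLin (Ustar * S * W) z‖ - ‖Matrix.toEuclideanLin E z‖
        ≤ ‖Matrix.toEuclideanLin Uhat z‖ := by
      have h2 : ‖Matrix.toEuclideanLin (Ustar * S * W) z‖
          ≤ ‖Matrix.toEuclideanLin Uhat z‖ + ‖Matrix.toEuclideanLin E z‖ := by
        calc ‖Matrix.toEuclideanLin (Ustar * S * W) z‖
            = ‖Matrix.toEuclideanLin Uhat z - Matrix.toEuclideanLin E z‖ := by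
              rw [hsum]; congr 1; abel
          _ ≤ ‖Matrix.toEuclideanLin Uhat z‖ + ‖Matrix.toEuclideanLin E z‖ :=
              norm_sub_le _ _
      linarith
    rw [hc]; nlinarith [norm_nonneg z]
  -- projection bound : ‖(1 - Ustar Ustarᵀ) v‖ ≤ ‖v‖
  set P : Matrix (Fin n) (Fin n) ℝ := 1 - Ustar * Ustarᵀ with hP
  have hPt : Pᵀ = P := by
    rw [hP, Matrix.transpose_sub, Matrix.transpose_one, Matrix.transpose_mul,
      Matrix.transpose_transpose]
  have hPP : Pᵀ * P = P := by
    rw [hPt, hP]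
    have hA : (Ustar * Ustarᵀ) * (Ustar * Ustarᵀ) = Ustar * Ustarᵀ := by
      rw [Matrix.mul_assoc, ← Matrix.mul_assoc Ustarᵀ, hUstar, Matrix.one_mul]
    rw [Matrix.sub_mul, Matrix.one_mul, Matrix.mul_sub, Matrix.mul_one, hA]
    abel
  have hproj : ∀ v : EuclideanSpace ℝ (Fin n),
      ‖Matrix.toEuclideanLin P v‖ ≤ ‖v‖ := by
    intro v
    have hsq : ‖Matrix.toEuclideanLin P v‖ ^ 2 = inner ℝ v (Matrix.toEuclideanLin P v) := by
      rw [eL_norm_sq, hPP]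
    have hcs : (inner ℝ v (Matrix.toEuclideanLin P v) : ℝ)
        ≤ ‖v‖ * ‖Matrix.toEuclideanLin P v‖ := real_inner_le_norm _ _
    rcases eq_or_lt_of_le (norm_nonneg (Matrix.toEuclideanLin P v)) with h0 | h0
    · rw [← h0]; exact norm_nonneg v
    · have : ‖Matrix.toEuclideanLin P v‖ * ‖Matrix.toEuclideanLin P v‖
          ≤ ‖v‖ * ‖Matrix.toEuclideanLin P v‖ := by nlinarith
      exact le_of_mul_le_mul_right this h0
  -- key matrix identity
  have hkey : P * U = P * ((E * S⁻¹) * (S * R⁻¹)) := by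
    have hPUstar : P * Ustar = 0 := by
      rw [hP, Matrix.sub_mul, Matrix.one_mul, Matrix.mul_assoc, hUstar, Matrix.mul_one, sub_self]
    have h1 : P * Uhat = P * E := by
      rw [hUhat, Matrix.mul_add, ← Matrix.mul_assoc, ← Matrix.mul_assoc, hPUstar,
        Matrix.zero_mul, Matrix.zero_mul, zero_add]
    rw [hU, ← Matrix.mul_assoc, h1, Matrix.mul_assoc, Matrix.mul_assoc]
    congr 1
    conv_lhs => rw [hE]
    simp [Matrix.mul_assoc]
  -- ‖R z‖ = ‖Uhat z‖
  have hRnorm : ∀ z : EuclideanSpace ℝ (Fin r),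
      ‖Matrix.toEuclideanLin R z‖ = ‖Matrix.toEuclideanLin Uhat z‖ := by
    intro z
    apply eL_norm_eq_of_gram
    have hRt : Rᵀ = R := by
      have := hRpsd.isHermitian
      rw [Matrix.IsHermitian] at this
      have h2 : Rᴴ = Rᵀ := by ext i j; simp [Matrix.conjTranspose_apply]
      rw [← h2, this]
    rw [hRt, hR2]
  -- main bound
  have hbound : sNorm (P * U) ≤ e * sNorm S / c := by
    apply sNorm_le _ (by positivity)
    intro y
    set z : EuclideanSpace ℝ (Fin r) := Matrix.toEuclideanLin R⁻¹ y with hz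
    have hyz : Matrix.toEuclideanLin R z = y := by
      rw [hz, ← eL_mul, Matrix.mul_nonsing_inv R hRinv, eL_one]
    have hzb : c * ‖z‖ ≤ ‖y‖ := by
      calc c * ‖z‖ ≤ ‖Matrix.toEuclideanLin Uhat z‖ := hUhat_lower z
        _ = ‖Matrix.toEuclideanLin R z‖ := (hRnorm z).symm
        _ = ‖y‖ := by rw [hyz]
    have happ : Matrix.toEuclideanLin (P * U) y
        = Matrix.toEuclideanLin P
            (Matrix.toEuclideanLin (E * S⁻¹) (Matrix.toEuclideanLin S z)) := by
      rw [hkey, eL_mul]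
      congr 1
      rw [eL_mul]
      congr 1
      rw [eL_mul, hz]
    calc ‖Matrix.toEuclideanLin (P * U) y‖
        = ‖Matrix.toEuclideanLin P
            (Matrix.toEuclideanLin (E * S⁻¹) (Matrix.toEuclideanLin S z))‖ := by rw [happ]
      _ ≤ ‖Matrix.toEuclideanLin (E * S⁻¹) (Matrix.toEuclideanLin S z)‖ := hproj _
      _ ≤ e * ‖Matrix.toEuclideanLin S z‖ := le_sNorm _ _
      _ ≤ e * (sNorm S * ‖z‖) := mul_le_mul_of_nonneg_left (le_sNorm _ _) he0
      _ ≤ e * sNorm S / c * ‖y‖ := by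
          rw [div_mul_eq_mul_div, le_div_iff₀ hc_pos]
          calc e * (sNorm S * ‖z‖) * c = (e * sNorm S) * (c * ‖z‖) := by ring
            _ ≤ (e * sNorm S) * ‖y‖ :=
                mul_le_mul_of_nonneg_left hzb (by positivity)
  have hRHS : e * sNorm S / c = e / ((sMin S / sNorm S) * sMin W - e) := by
    rw [hc]
    field_simp
  calc sNorm (P * U) ≤ e * sNorm S / c := hbound
    _ = e / ((sMin S / sNorm S) * sMin W - e) := hRHS
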